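/- Let m̂ be the unique positive real number satisfying 2Φ(−m̂) = m̂·φ(m̂). Then the function x ↦ 2Φ(−x) − x·φ(x) is strictly positive for 0 ≤ x < m̂ and strictly negative for x > m̂. -/

import Mathlib

open MeasureTheory Set Filter Topology

/-- The standard normal cumulative distribution function
`Φ(x) = ∫_{−∞}^x (2π)^{−1/2} e^{−t²/2} dt`. -/
noncomputable def Phi (x : ℝ) : ℝ :=
  ∫ t in Set.Iic x, (Real.sqrt (2 * Real.pi))⁻¹ * Real.exp (-t ^ 2 / 2)

/-- The standard normal density `φ(x) = (2π)^{−1/2} e^{−x²/2}`. -/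
noncomputable def phi (x : ℝ) : ℝ :=
  (Real.sqrt (2 * Real.pi))⁻¹ * Real.exp (-x ^ 2 / 2)

lemma phi_pos (x : ℝ) : 0 < phi x := by
  unfold phi
  have h : (0:ℝ) < Real.sqrt (2 * Real.pi) := Real.sqrt_pos.2 (by positivity)
  positivity

lemma phi_even (x : ℝ) : phi (-x) = phi x := by unfold phi; ring_nf

lemma phi_eq : phi = fun t => (Real.sqrt (2 * Real.pi))⁻¹ * Real.exp (-(2⁻¹) * t ^ 2) := by
  funext t; unfold phi; rw [show -(2⁻¹:ℝ) * t^2 = -t^2/2 by ring]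

lemma integrable_phi : Integrable phi := by
  rw [phi_eq]
  exact (integrable_exp_neg_mul_sq (by norm_num : (0:ℝ) < 2⁻¹)).const_mul _

lemma continuous_phi : Continuous phi := by unfold phi; continuity

lemma hasDerivAt_Phi (x : ℝ) : HasDerivAt Phi (phi x) x := by
  have h : Phi = fun y => Phi 0 + ∫ t in (0:ℝ)..y, phi t := by
    funext y
    have h1 := intervalIntegral.integral_Iic_sub_Iic (μ := volume) (f := phi)
      (integrable_phi.integrableOn) (integrable_phi.integrableOn) (a := (0:ℝ)) (b := y)
    have h2 : ∀ z : ℝ, Phi z = ∫ t in Iic z, phi t := fun z => rfl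
    rw [h2 y, h2 0] at *
    linarith
  rw [h]
  exact ((continuous_phi.integral_hasStrictDerivAt 0 x).hasDerivAt).const_add _

lemma hasDerivAt_phi (x : ℝ) : HasDerivAt phi (-x * phi x) x := by
  have h1 : HasDerivAt (fun t : ℝ => -t^2/2) (-x) x := by
    have h := ((hasDerivAt_pow 2 x).neg).div_const 2
    exact h.congr_deriv (by ring)
  have h2 := (h1.exp).const_mul (Real.sqrt (2*Real.pi))⁻¹
  exact h2.congr_deriv (by unfold phi; ring)

lemma phi_tendsto_atBot : Tendsto phi atBot (𝓝 0) := by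
  have h2 : Tendsto (fun t : ℝ => t^2) atBot atTop := by
    have h := (tendsto_pow_atTop (α := ℝ) (n := 2) (by norm_num)).comp
      (tendsto_neg_atBot_atTop : Tendsto (fun t : ℝ => -t) atBot atTop)
    have he : ((fun x : ℝ => x ^ 2) ∘ (fun t : ℝ => -t)) = fun t : ℝ => t ^ 2 := by
      funext t; simp [Function.comp, neg_pow]
    rwa [he] at h
  have h3 : Tendsto (fun t : ℝ => -t^2) atBot atBot := tendsto_neg_atTop_atBot.comp h2
  have h4 : Tendsto (fun t : ℝ => -t^2/2) atBot atBot := h3.atBot_div_const two_pos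
  have h5 := (Real.tendsto_exp_atBot).comp h4
  have h6 := h5.const_mul (Real.sqrt (2*Real.pi))⁻¹
  have he : phi = fun t : ℝ => (Real.sqrt (2*Real.pi))⁻¹ * (Real.exp ∘ fun t : ℝ => -t^2/2) t := by
    funext t; rfl
  rw [he, show (0:ℝ) = (Real.sqrt (2*Real.pi))⁻¹ * 0 by ring]
  exact h6

lemma integrable_neg_mul_phi : Integrable (fun t : ℝ => -t * phi t) := by
  have h := (integrable_mul_exp_neg_mul_sq (by norm_num : (0:ℝ) < 2⁻¹)).const_mul
    (-(Real.sqrt (2*Real.pi))⁻¹)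
  have he : (fun t : ℝ => -t * phi t)
      = fun t => (-(Real.sqrt (2*Real.pi))⁻¹) * (t * Real.exp (-(2⁻¹) * t^2)) := by
    funext t; rw [phi_eq]; ring
  rw [he]; exact h

lemma integral_neg_mul_phi (a : ℝ) : ∫ t in Iic a, (-t) * phi t = phi a := by
  have := integral_Iic_of_hasDerivAt_of_tendsto' (a := a) (f := phi)
    (f' := fun t => -t * phi t) (fun x _ => hasDerivAt_phi x)
    integrable_neg_mul_phi.integrableOn phi_tendsto_atBot
  simpa using this

lemma mills (x : ℝ) (hx : 0 < x) : Phi (-x) ≤ phi x / x := by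
  have hPhi : Phi (-x) = ∫ t in Iic (-x), phi t := rfl
  have key : ∫ t in Iic (-x), phi t ≤ ∫ t in Iic (-x), (-t/x) * phi t := by
    refine setIntegral_mono_on integrable_phi.integrableOn ?_ measurableSet_Iic ?_
    · have : (fun t : ℝ => -t/x * phi t) = fun t => x⁻¹ * (-t * phi t) := by
        funext t; ring
      rw [this]
      exact (integrable_neg_mul_phi.const_mul _).integrableOn
    · intro t ht
      have h1 : x ≤ -t := by have := mem_Iic.mp ht; linarith
      have h2 : 1 ≤ -t/x := by rw [le_div_iff₀ hx]; linarith
      nlinarith [phi_pos t]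
  have calc2 : ∫ t in Iic (-x), (-t/x) * phi t = phi x / x := by
    have he : (fun t : ℝ => -t/x * phi t) = fun t => x⁻¹ * (-t * phi t) := by
      funext t; ring
    rw [he, integral_const_mul, integral_neg_mul_phi, phi_even]
    rw [div_eq_inv_mul]
  rw [hPhi]
  rw [calc2] at key
  exact key

/-- Let `m̂` be the (unique) positive real number satisfying
`2Φ(−m̂) = m̂·φ(m̂)`. Then `x ↦ 2Φ(−x) − x·φ(x)` is strictly positive for `0 ≤ x < m̂`
and strictly negative for `x > m̂`. -/
theorem sign_of_two_Phi_neg_sub_mul_phi (m : ℝ) (hm : 0 < m)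
    (hmeq : 2 * Phi (-m) = m * phi m) :
    (∀ x : ℝ, 0 ≤ x → x < m → 0 < 2 * Phi (-x) - x * phi x) ∧
    (∀ x : ℝ, m < x → 2 * Phi (-x) - x * phi x < 0) := by
  set g : ℝ → ℝ := fun x => 2 * Phi (-x) - x * phi x with hgdef
  have hgm : g m = 0 := by simp only [hgdef]; linarith
  have hg' : ∀ x : ℝ, HasDerivAt g ((x^2 - 3) * phi x) x := by
    intro x
    have h1 : HasDerivAt (fun y : ℝ => Phi (-y)) (phi (-x) * (-1)) x :=
      (hasDerivAt_Phi (-x)).comp x (hasDerivAt_neg x)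
    have h2 : HasDerivAt (fun y : ℝ => y * phi y) (1 * phi x + x * (-x * phi x)) x :=
      (hasDerivAt_id x).mul (hasDerivAt_phi x)
    have h3 := (h1.const_mul 2).sub h2
    exact h3.congr_deriv (by rw [phi_even]; ring)
  have hcont : Continuous g := by
    have : Differentiable ℝ g := fun x => (hg' x).differentiableAt
    exact this.continuous
  have hanti : StrictAntiOn g (Icc 0 (Real.sqrt 3)) := by
    apply strictAntiOn_of_deriv_neg (convex_Icc _ _) hcont.continuousOn
    intro x hx
    rw [interior_Icc] at hx
    rw [(hg' x).deriv]
    have h3 : x^2 < 3 := by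
      have hs : Real.sqrt 3 ^ 2 = 3 := Real.sq_sqrt (by norm_num)
      nlinarith [hx.1, hx.2, Real.sqrt_nonneg 3]
    nlinarith [phi_pos x]
  have hneg : ∀ x : ℝ, Real.sqrt 2 < x → g x < 0 := by
    intro x hx
    have hx0 : 0 < x := lt_of_le_of_lt (Real.sqrt_nonneg 2) hx
    have h2x : 2 < x^2 := by
      have hs : Real.sqrt 2 ^ 2 = 2 := Real.sq_sqrt (by norm_num)
      nlinarith [Real.sqrt_nonneg 2]
    have hmi := mills x hx0
    have hp := phi_pos x
    have hlt : 2 * (phi x / x) < x * phi x := by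
      have hq : phi x / x * x = phi x := div_mul_cancel₀ _ hx0.ne'
      have hq0 : 0 < phi x / x := div_pos hp hx0
      nlinarith
    simp only [hgdef]
    have : 2 * Phi (-x) ≤ 2 * (phi x / x) := by linarith
    linarith
  have hm2 : m ≤ Real.sqrt 2 := by
    by_contra h
    push_neg at h
    exact absurd hgm (ne_of_lt (hneg m h))
  have hs23 : Real.sqrt 2 < Real.sqrt 3 := Real.sqrt_lt_sqrt (by norm_num) (by norm_num)
  have hmIcc : m ∈ Icc (0:ℝ) (Real.sqrt 3) := ⟨hm.le, hm2.trans hs23.le⟩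
  constructor
  · intro x hx0 hxm
    have hxIcc : x ∈ Icc (0:ℝ) (Real.sqrt 3) := ⟨hx0, (hxm.le.trans hm2).trans hs23.le⟩
    have := hanti hxIcc hmIcc hxm
    simp only [hgdef] at this hgm ⊢
    linarith
  · intro x hxm
    by_cases hx3 : x ≤ Real.sqrt 3
    · have hxIcc : x ∈ Icc (0:ℝ) (Real.sqrt 3) := ⟨(hm.trans hxm).le, hx3⟩
      have := hanti hmIcc hxIcc hxm
      simp only [hgdef] at this hgm ⊢
      linarith
    · push_neg at hx3
      have := hneg x (hs23.trans hx3)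
      simpa [hgdef] using this
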